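/- Let F0∈ℝ and let ψ,u,v∥,ρ be smooth on {R>0}×ℝ_φ×ℝ_Z; set B := ((1/R)∂_Zψ)e_R+(F0/R)e_φ+(−(1/R)∂_Rψ)e_Z, v_pol := (−R∂_Zu)e_R+(R∂_Ru)e_Z, j := Δ*ψ, and |B_pol|² := ((∂_Rψ)²+(∂_Zψ)²)/R². Then B·( ρ (v∥B)·∇v_pol ) = −Rρv∥[u, |B_pol|²/2] + ρv∥(j/R)[u,ψ] + (ρv∥/R)[ψ, (∇_polψ·∇_polu)] − (ρv∥F0/R²)(∇_polψ·∇_pol(∂_φu)) − ρv∥(F0²/R²)∂_Zu, where ∇_pol a·∇_pol b := ∂_Ra∂_Rb+∂_Za∂_Zb. -/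

import Mathlib

noncomputable section
set_option linter.unusedVariables false

open Real

/-- Scalar fields on the cylindrical domain, as functions of `(R, φ, Z)`. -/
abbrev F3 := ℝ → ℝ → ℝ → ℝ

/-- Partial derivative in `R`. -/
def dR (f : F3) (R φ Z : ℝ) : ℝ := deriv (fun r => f r φ Z) R

/-- Partial derivative in `φ`. -/
def dP (f : F3) (R φ Z : ℝ) : ℝ := deriv (fun a => f R a Z) φ

/-- Partial derivative in `Z`. -/
def dZ (f : F3) (R φ Z : ℝ) : ℝ := deriv (fun z => f R φ z) Z

/-- Joint smoothness (C^∞) of a scalar field. -/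
def Smooth3 (f : F3) : Prop :=
  ContDiff ℝ (⊤ : ℕ∞) fun q : ℝ × ℝ × ℝ => f q.1 q.2.1 q.2.2

/-- Poisson bracket `[a,b] = ∂_R a ∂_Z b − ∂_Z a ∂_R b`. -/
def pb (a b : F3) (R φ Z : ℝ) : ℝ :=
  dR a R φ Z * dZ b R φ Z - dZ a R φ Z * dR b R φ Z

/-- Grad–Shafranov operator `Δ* f = R ∂_R((1/R) ∂_R f) + ∂_ZZ f`. -/
def GS (f : F3) (R φ Z : ℝ) : ℝ :=
  R * dR (fun r a z => (1 / r) * dR f r a z) R φ Z + dZ (dZ f) R φ Z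

/-- Poloidal Laplacian `Δ_pol f = (1/R) ∂_R(R ∂_R f) + ∂_ZZ f`. -/
def LapPol (f : F3) (R φ Z : ℝ) : ℝ :=
  (1 / R) * dR (fun r a z => r * dR f r a z) R φ Z + dZ (dZ f) R φ Z

/-- Cylindrical divergence `∇·F = (1/R)∂_R(R F_R) + (1/R)∂_φ F_φ + ∂_Z F_Z`. -/
def divC (FR Fφ FZ : F3) (R φ Z : ℝ) : ℝ :=
  (1 / R) * dR (fun r a z => r * FR r a z) R φ Z + (1 / R) * dP Fφ R φ Z + dZ FZ R φ Z

/-- Scalar advection `X·∇f = X_R ∂_R f + (X_φ/R) ∂_φ f + X_Z ∂_Z f`. -/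
def advS (XvR XvP XvZ f : F3) (R φ Z : ℝ) : ℝ :=
  XvR R φ Z * dR f R φ Z + XvP R φ Z / R * dP f R φ Z + XvZ R φ Z * dZ f R φ Z

/-- `e_R`-component of the vector advection `X·∇Y`. -/
def advVR (XvR XvP XvZ YvR YvP YvZ : F3) (R φ Z : ℝ) : ℝ :=
  advS XvR XvP XvZ YvR R φ Z - XvP R φ Z * YvP R φ Z / R

/-- `e_φ`-component of the vector advection `X·∇Y`. -/
def advVP (XvR XvP XvZ YvR YvP YvZ : F3) (R φ Z : ℝ) : ℝ :=
  advS XvR XvP XvZ YvP R φ Z + XvP R φ Z * YvR R φ Z / R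

/-- `e_Z`-component of the vector advection `X·∇Y`. -/
def advVZ (XvR XvP XvZ YvR YvP YvZ : F3) (R φ Z : ℝ) : ℝ :=
  advS XvR XvP XvZ YvZ R φ Z

/-- `e_R`-component of `B = (1/R)∇ψ×e_φ + (F0/R)e_φ`. -/
def BR (ψ : F3) : F3 := fun R φ Z => (1 / R) * dZ ψ R φ Z

/-- `e_φ`-component of the magnetic field. -/
def BP (F0 : ℝ) : F3 := fun R _ _ => F0 / R

/-- `e_Z`-component of the magnetic field. -/
def BZ (ψ : F3) : F3 := fun R φ Z => -(1 / R) * dR ψ R φ Z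

/-- `e_R`-component of `v_pol = −R∇u×e_φ`. -/
def vR (u : F3) : F3 := fun R φ Z => -R * dZ u R φ Z

/-- `e_Z`-component of `v_pol = −R∇u×e_φ`. -/
def vZ (u : F3) : F3 := fun R φ Z => R * dR u R φ Z

/-- The zero field. -/
def zeroF : F3 := fun _ _ _ => 0

/-- `|B|² = (F0² + (∂_Rψ)² + (∂_Zψ)²)/R²`. -/
def B2 (F0 : ℝ) (ψ : F3) : F3 := fun R φ Z =>
  (F0 ^ 2 + (dR ψ R φ Z) ^ 2 + (dZ ψ R φ Z) ^ 2) / R ^ 2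

/-- `|B_pol|² = ((∂_Rψ)² + (∂_Zψ)²)/R²`. -/
def Bpol2 (ψ : F3) : F3 := fun R φ Z => ((dR ψ R φ Z) ^ 2 + (dZ ψ R φ Z) ^ 2) / R ^ 2

/-- `ρ̂ = R²ρ`. -/
def rh (ρ : F3) : F3 := fun R φ Z => R ^ 2 * ρ R φ Z

/-- `∇_pol a · ∇_pol b`. -/
def gdot (a b : F3) : F3 := fun R φ Z =>
  dR a R φ Z * dR b R φ Z + dZ a R φ Z * dZ b R φ Z

/-- `e_R`-component of `v∥ B`. -/
def XR (ψ vpar : F3) : F3 := fun R φ Z => vpar R φ Z * BR ψ R φ Z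

/-- `e_φ`-component of `v∥ B`. -/
def XP (F0 : ℝ) (vpar : F3) : F3 := fun R φ Z => vpar R φ Z * BP F0 R φ Z

/-- `e_Z`-component of `v∥ B`. -/
def XZ (ψ vpar : F3) : F3 := fun R φ Z => vpar R φ Z * BZ ψ R φ Z

/-! ### Auxiliary calculus lemmas -/

/-- Uncurried version of a scalar field. -/
def unc (f : F3) : ℝ × ℝ × ℝ → ℝ := fun q => f q.1 q.2.1 q.2.2

lemma hasDerivAt_line_R (f : F3) (hf : Smooth3 f) (R φ Z : ℝ) :
    HasDerivAt (fun r => f r φ Z) (fderiv ℝ (unc f) (R, φ, Z) (1, 0, 0)) R := by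
  have hL : HasDerivAt (fun r : ℝ => ((r, φ, Z) : ℝ × ℝ × ℝ)) ((1:ℝ), (0:ℝ), (0:ℝ)) R :=
    (hasDerivAt_id R).prodMk (hasDerivAt_const R (φ, Z))
  exact ((hf.differentiable (by simp) (R, φ, Z)).hasFDerivAt).comp_hasDerivAt R hL

lemma hasDerivAt_line_P (f : F3) (hf : Smooth3 f) (R φ Z : ℝ) :
    HasDerivAt (fun a => f R a Z) (fderiv ℝ (unc f) (R, φ, Z) (0, 1, 0)) φ := by
  have hL : HasDerivAt (fun a : ℝ => ((R, a, Z) : ℝ × ℝ × ℝ)) ((0:ℝ), (1:ℝ), (0:ℝ)) φ :=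
    (hasDerivAt_const φ R).prodMk ((hasDerivAt_id φ).prodMk (hasDerivAt_const φ Z))
  exact ((hf.differentiable (by simp) (R, φ, Z)).hasFDerivAt).comp_hasDerivAt φ hL

lemma hasDerivAt_line_Z (f : F3) (hf : Smooth3 f) (R φ Z : ℝ) :
    HasDerivAt (fun z => f R φ z) (fderiv ℝ (unc f) (R, φ, Z) (0, 0, 1)) Z := by
  have hL : HasDerivAt (fun z : ℝ => ((R, φ, z) : ℝ × ℝ × ℝ)) ((0:ℝ), (0:ℝ), (1:ℝ)) Z :=
    (hasDerivAt_const Z R).prodMk ((hasDerivAt_const Z φ).prodMk (hasDerivAt_id Z))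
  exact ((hf.differentiable (by simp) (R, φ, Z)).hasFDerivAt).comp_hasDerivAt Z hL

lemma dR_eq (f : F3) (hf : Smooth3 f) (R φ Z : ℝ) :
    dR f R φ Z = fderiv ℝ (unc f) (R, φ, Z) (1, 0, 0) :=
  (hasDerivAt_line_R f hf R φ Z).deriv

lemma dP_eq (f : F3) (hf : Smooth3 f) (R φ Z : ℝ) :
    dP f R φ Z = fderiv ℝ (unc f) (R, φ, Z) (0, 1, 0) :=
  (hasDerivAt_line_P f hf R φ Z).deriv

lemma dZ_eq (f : F3) (hf : Smooth3 f) (R φ Z : ℝ) :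
    dZ f R φ Z = fderiv ℝ (unc f) (R, φ, Z) (0, 0, 1) :=
  (hasDerivAt_line_Z f hf R φ Z).deriv

lemma hasDerivAt_dR (f : F3) (hf : Smooth3 f) (R φ Z : ℝ) :
    HasDerivAt (fun r => f r φ Z) (dR f R φ Z) R := by
  rw [dR_eq f hf]; exact hasDerivAt_line_R f hf R φ Z

lemma hasDerivAt_dP (f : F3) (hf : Smooth3 f) (R φ Z : ℝ) :
    HasDerivAt (fun a => f R a Z) (dP f R φ Z) φ := by
  rw [dP_eq f hf]; exact hasDerivAt_line_P f hf R φ Z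

lemma hasDerivAt_dZ (f : F3) (hf : Smooth3 f) (R φ Z : ℝ) :
    HasDerivAt (fun z => f R φ z) (dZ f R φ Z) Z := by
  rw [dZ_eq f hf]; exact hasDerivAt_line_Z f hf R φ Z

lemma unc_pd_eq (f : F3) (hf : Smooth3 f) (v : ℝ × ℝ × ℝ)
    (g : F3) (hg : ∀ R φ Z, g R φ Z = fderiv ℝ (unc f) (R, φ, Z) v) :
    unc g = fun p => fderiv ℝ (unc f) p v := by
  funext p; exact hg p.1 p.2.1 p.2.2

lemma smooth_pd_field (f : F3) (hf : Smooth3 f) (v : ℝ × ℝ × ℝ) :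
    ContDiff ℝ (⊤ : ℕ∞) (fun p => fderiv ℝ (unc f) p v) :=
  (hf.fderiv_right (by exact_mod_cast le_top)).clm_apply contDiff_const

lemma smooth_dR (f : F3) (hf : Smooth3 f) : Smooth3 (dR f) := by
  have h : (fun q : ℝ × ℝ × ℝ => dR f q.1 q.2.1 q.2.2)
      = fun p => fderiv ℝ (unc f) p (1, 0, 0) := by
    funext p; exact dR_eq f hf p.1 p.2.1 p.2.2
  rw [Smooth3, h]; exact smooth_pd_field f hf _

lemma smooth_dP (f : F3) (hf : Smooth3 f) : Smooth3 (dP f) := by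
  have h : (fun q : ℝ × ℝ × ℝ => dP f q.1 q.2.1 q.2.2)
      = fun p => fderiv ℝ (unc f) p (0, 1, 0) := by
    funext p; exact dP_eq f hf p.1 p.2.1 p.2.2
  rw [Smooth3, h]; exact smooth_pd_field f hf _

lemma smooth_dZ (f : F3) (hf : Smooth3 f) : Smooth3 (dZ f) := by
  have h : (fun q : ℝ × ℝ × ℝ => dZ f q.1 q.2.1 q.2.2)
      = fun p => fderiv ℝ (unc f) p (0, 0, 1) := by
    funext p; exact dZ_eq f hf p.1 p.2.1 p.2.2
  rw [Smooth3, h]; exact smooth_pd_field f hf _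

lemma clairaut_gen (f : F3) (hf : Smooth3 f) (v w : ℝ × ℝ × ℝ) (q : ℝ × ℝ × ℝ) :
    fderiv ℝ (fun p => fderiv ℝ (unc f) p v) q w
      = fderiv ℝ (fun p => fderiv ℝ (unc f) p w) q v := by
  have hd : ∀ y, HasFDerivAt (unc f) (fderiv ℝ (unc f) y) y :=
    fun y => (hf.differentiable (by simp) y).hasFDerivAt
  have hf'' : HasFDerivAt (fderiv ℝ (unc f)) (fderiv ℝ (fderiv ℝ (unc f)) q) q :=
    ((hf.fderiv_right (m := (⊤ : ℕ∞)) (by exact_mod_cast le_top)).differentiable (by simp) q).hasFDerivAt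
  have hsym := second_derivative_symmetric hd hf''
  have hv : HasFDerivAt (fun p => fderiv ℝ (unc f) p v)
      ((fderiv ℝ (fderiv ℝ (unc f)) q).flip v) q := by
    simpa using hf''.clm_apply (hasFDerivAt_const v q)
  have hw : HasFDerivAt (fun p => fderiv ℝ (unc f) p w)
      ((fderiv ℝ (fderiv ℝ (unc f)) q).flip w) q := by
    simpa using hf''.clm_apply (hasFDerivAt_const w q)
  rw [hv.fderiv, hw.fderiv]
  simpa using hsym w v

lemma dZ_dR (f : F3) (hf : Smooth3 f) (R φ Z : ℝ) :
    dZ (dR f) R φ Z = dR (dZ f) R φ Z := by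
  rw [dZ_eq (dR f) (smooth_dR f hf), dR_eq (dZ f) (smooth_dZ f hf),
    unc_pd_eq f hf (1,0,0) (dR f) (dR_eq f hf),
    unc_pd_eq f hf (0,0,1) (dZ f) (dZ_eq f hf)]
  exact clairaut_gen f hf (1,0,0) (0,0,1) (R, φ, Z)

lemma dP_dR (f : F3) (hf : Smooth3 f) (R φ Z : ℝ) :
    dP (dR f) R φ Z = dR (dP f) R φ Z := by
  rw [dP_eq (dR f) (smooth_dR f hf), dR_eq (dP f) (smooth_dP f hf),
    unc_pd_eq f hf (1,0,0) (dR f) (dR_eq f hf),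
    unc_pd_eq f hf (0,1,0) (dP f) (dP_eq f hf)]
  exact clairaut_gen f hf (1,0,0) (0,1,0) (R, φ, Z)

lemma dP_dZ (f : F3) (hf : Smooth3 f) (R φ Z : ℝ) :
    dP (dZ f) R φ Z = dZ (dP f) R φ Z := by
  rw [dP_eq (dZ f) (smooth_dZ f hf), dZ_eq (dP f) (smooth_dP f hf),
    unc_pd_eq f hf (0,0,1) (dZ f) (dZ_eq f hf),
    unc_pd_eq f hf (0,1,0) (dP f) (dP_eq f hf)]
  exact clairaut_gen f hf (0,0,1) (0,1,0) (R, φ, Z)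

/-- `B·(ρ ((v∥B)·∇v_pol))` in terms of reduced-MHD quantities. -/
theorem B_dot_mixed_advection_par_pol (F0 : ℝ) (ψ u vpar ρ : F3)
    (hψ : Smooth3 ψ) (hu : Smooth3 u) (hv : Smooth3 vpar) (hρ : Smooth3 ρ) :
    ∀ R φ Z : ℝ, 0 < R →
      BR ψ R φ Z * (ρ R φ Z
          * advVR (XR ψ vpar) (XP F0 vpar) (XZ ψ vpar) (vR u) zeroF (vZ u) R φ Z)
        + BP F0 R φ Z * (ρ R φ Z
          * advVP (XR ψ vpar) (XP F0 vpar) (XZ ψ vpar) (vR u) zeroF (vZ u) R φ Z)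
        + BZ ψ R φ Z * (ρ R φ Z
          * advVZ (XR ψ vpar) (XP F0 vpar) (XZ ψ vpar) (vR u) zeroF (vZ u) R φ Z)
      = -(R * ρ R φ Z * vpar R φ Z) * pb u (fun r a z => Bpol2 ψ r a z / 2) R φ Z
        + ρ R φ Z * vpar R φ Z * (GS ψ R φ Z / R) * pb u ψ R φ Z
        + (ρ R φ Z * vpar R φ Z / R) * pb ψ (gdot ψ u) R φ Z
        - (ρ R φ Z * vpar R φ Z * F0 / R ^ 2)
            * (dR ψ R φ Z * dR (dP u) R φ Z + dZ ψ R φ Z * dZ (dP u) R φ Z)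
        - ρ R φ Z * vpar R φ Z * (F0 ^ 2 / R ^ 2) * dZ u R φ Z := by
  intro R φ Z hR
  have hR0 : R ≠ 0 := ne_of_gt hR
  have huR := smooth_dR u hu
  have huZ := smooth_dZ u hu
  have hψR := smooth_dR ψ hψ
  have hψZ := smooth_dZ ψ hψ
  -- derivatives of the poloidal velocity components
  have hA : dR (vR u) R φ Z = -1 * dZ u R φ Z + -R * dR (dZ u) R φ Z := by
    have h : HasDerivAt (fun r => vR u r φ Z)
        (-1 * dZ u R φ Z + -R * dR (dZ u) R φ Z) R := by
      simpa [vR] using ((hasDerivAt_id R).fun_neg.fun_mul (hasDerivAt_dR (dZ u) huZ R φ Z))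
    exact h.deriv
  have hB : dP (vR u) R φ Z = -R * dP (dZ u) R φ Z := by
    have h : HasDerivAt (fun a => vR u R a Z) (-R * dP (dZ u) R φ Z) φ := by
      simpa [vR] using (hasDerivAt_dP (dZ u) huZ R φ Z).const_mul (-R)
    exact h.deriv
  have hC : dZ (vR u) R φ Z = -R * dZ (dZ u) R φ Z := by
    have h : HasDerivAt (fun z => vR u R φ z) (-R * dZ (dZ u) R φ Z) Z := by
      simpa [vR] using (hasDerivAt_dZ (dZ u) huZ R φ Z).const_mul (-R)
    exact h.deriv
  have hD : dR (vZ u) R φ Z = 1 * dR u R φ Z + R * dR (dR u) R φ Z := by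
    have h : HasDerivAt (fun r => vZ u r φ Z)
        (1 * dR u R φ Z + R * dR (dR u) R φ Z) R := by
      simpa [vZ] using ((hasDerivAt_id R).fun_mul (hasDerivAt_dR (dR u) huR R φ Z))
    exact h.deriv
  have hE : dP (vZ u) R φ Z = R * dP (dR u) R φ Z := by
    have h : HasDerivAt (fun a => vZ u R a Z) (R * dP (dR u) R φ Z) φ := by
      simpa [vZ] using (hasDerivAt_dP (dR u) huR R φ Z).const_mul R
    exact h.deriv
  have hF : dZ (vZ u) R φ Z = R * dZ (dR u) R φ Z := by
    have h : HasDerivAt (fun z => vZ u R φ z) (R * dZ (dR u) R φ Z) Z := by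
      simpa [vZ] using (hasDerivAt_dZ (dR u) huR R φ Z).const_mul R
    exact h.deriv
  -- derivatives of the zero field
  have hz1 : dR zeroF R φ Z = 0 := by simp [dR, zeroF]
  have hz2 : dP zeroF R φ Z = 0 := by simp [dP, zeroF]
  have hz3 : dZ zeroF R φ Z = 0 := by simp [dZ, zeroF]
  -- Grad–Shafranov inner derivative
  have hGS : dR (fun r a z => 1 / r * dR ψ r a z) R φ Z
      = -(R ^ 2)⁻¹ * dR ψ R φ Z + R⁻¹ * dR (dR ψ) R φ Z := by
    have h : HasDerivAt (fun r => 1 / r * dR ψ r φ Z)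
        (-(R ^ 2)⁻¹ * dR ψ R φ Z + R⁻¹ * dR (dR ψ) R φ Z) R := by
      simpa [one_div] using ((hasDerivAt_inv hR0).fun_mul (hasDerivAt_dR (dR ψ) hψR R φ Z))
    exact h.deriv
  -- derivatives of |B_pol|²/2
  have hnumR : HasDerivAt (fun r => (dR ψ r φ Z) ^ 2 + (dZ ψ r φ Z) ^ 2)
      (2 * dR ψ R φ Z * dR (dR ψ) R φ Z + 2 * dZ ψ R φ Z * dR (dZ ψ) R φ Z) R := by
    simpa using (((hasDerivAt_dR (dR ψ) hψR R φ Z).fun_pow 2).fun_add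
      ((hasDerivAt_dR (dZ ψ) hψZ R φ Z).fun_pow 2))
  have hnumZ : HasDerivAt (fun z => (dR ψ R φ z) ^ 2 + (dZ ψ R φ z) ^ 2)
      (2 * dR ψ R φ Z * dZ (dR ψ) R φ Z + 2 * dZ ψ R φ Z * dZ (dZ ψ) R φ Z) Z := by
    simpa using (((hasDerivAt_dZ (dR ψ) hψR R φ Z).fun_pow 2).fun_add
      ((hasDerivAt_dZ (dZ ψ) hψZ R φ Z).fun_pow 2))
  have hBpR : dR (fun r a z => Bpol2 ψ r a z / 2) R φ Z
      = ((2 * dR ψ R φ Z * dR (dR ψ) R φ Z + 2 * dZ ψ R φ Z * dR (dZ ψ) R φ Z) * R ^ 2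
          - ((dR ψ R φ Z) ^ 2 + (dZ ψ R φ Z) ^ 2) * (2 * R)) / (R ^ 2) ^ 2 / 2 := by
    have h : HasDerivAt (fun r => Bpol2 ψ r φ Z / 2)
        (((2 * dR ψ R φ Z * dR (dR ψ) R φ Z + 2 * dZ ψ R φ Z * dR (dZ ψ) R φ Z) * R ^ 2
          - ((dR ψ R φ Z) ^ 2 + (dZ ψ R φ Z) ^ 2) * (2 * R)) / (R ^ 2) ^ 2 / 2) R := by
      have h2 : HasDerivAt (fun r : ℝ => r ^ 2) (2 * R) R := by
        simpa using hasDerivAt_pow 2 R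
      simpa [Bpol2] using (hnumR.div h2 (pow_ne_zero 2 hR0)).div_const 2
    exact h.deriv
  have hBpZ : dZ (fun r a z => Bpol2 ψ r a z / 2) R φ Z
      = (2 * dR ψ R φ Z * dZ (dR ψ) R φ Z + 2 * dZ ψ R φ Z * dZ (dZ ψ) R φ Z) / R ^ 2 / 2 := by
    have h : HasDerivAt (fun z => Bpol2 ψ R φ z / 2)
        ((2 * dR ψ R φ Z * dZ (dR ψ) R φ Z + 2 * dZ ψ R φ Z * dZ (dZ ψ) R φ Z)
          / R ^ 2 / 2) Z := by
      exact (hnumZ.div_const (R ^ 2)).div_const 2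
    exact h.deriv
  -- derivatives of ∇ψ·∇u
  have hgR : dR (gdot ψ u) R φ Z
      = (dR (dR ψ) R φ Z * dR u R φ Z + dR ψ R φ Z * dR (dR u) R φ Z)
        + (dR (dZ ψ) R φ Z * dZ u R φ Z + dZ ψ R φ Z * dR (dZ u) R φ Z) := by
    have h : HasDerivAt (fun r => gdot ψ u r φ Z)
        ((dR (dR ψ) R φ Z * dR u R φ Z + dR ψ R φ Z * dR (dR u) R φ Z)
          + (dR (dZ ψ) R φ Z * dZ u R φ Z + dZ ψ R φ Z * dR (dZ u) R φ Z)) R := by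
      simpa [gdot] using
        (((hasDerivAt_dR (dR ψ) hψR R φ Z).fun_mul (hasDerivAt_dR (dR u) huR R φ Z)).fun_add
          ((hasDerivAt_dR (dZ ψ) hψZ R φ Z).fun_mul (hasDerivAt_dR (dZ u) huZ R φ Z)))
    exact h.deriv
  have hgZ : dZ (gdot ψ u) R φ Z
      = (dZ (dR ψ) R φ Z * dR u R φ Z + dR ψ R φ Z * dZ (dR u) R φ Z)
        + (dZ (dZ ψ) R φ Z * dZ u R φ Z + dZ ψ R φ Z * dZ (dZ u) R φ Z) := by
    have h : HasDerivAt (fun z => gdot ψ u R φ z)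
        ((dZ (dR ψ) R φ Z * dR u R φ Z + dR ψ R φ Z * dZ (dR u) R φ Z)
          + (dZ (dZ ψ) R φ Z * dZ u R φ Z + dZ ψ R φ Z * dZ (dZ u) R φ Z)) Z := by
      simpa [gdot] using
        (((hasDerivAt_dZ (dR ψ) hψR R φ Z).fun_mul (hasDerivAt_dZ (dR u) huR R φ Z)).fun_add
          ((hasDerivAt_dZ (dZ ψ) hψZ R φ Z).fun_mul (hasDerivAt_dZ (dZ u) huZ R φ Z)))
    exact h.deriv
  -- unfold and substitute
  simp only [advVR, advVP, advVZ, advS, XR, XP, XZ, BR, BP, BZ, pb, GS]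
  rw [hA, hB, hC, hD, hE, hF, hz1, hz2, hz3, hGS, hBpR, hBpZ, hgR, hgZ]
  simp only [vR, vZ, zeroF]
  rw [← dZ_dR ψ hψ R φ Z, ← dZ_dR u hu R φ Z, dP_dZ u hu R φ Z, dP_dR u hu R φ Z]
  field_simp
  ring
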